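/- For t > 0, the equation ψ(λ) = 0 has a unique root on (−∞, v_max), where ψ(λ) = Σ_{i=1}^n max(v_i − λ, 0) − t. -/

import Mathlib

theorem psi_unique_root (n : ℕ) (t : ℝ) (ht : 0 < t) (v : Fin n → ℝ) (vmax : ℝ)
    (hvmax_le : ∀ i, v i ≤ vmax) (hvmax_mem : ∃ i, v i = vmax) :
    ∃! lam : ℝ, lam < vmax ∧ (∑ i, max (v i - lam) 0) - t = 0 := by
  obtain ⟨j, hj⟩ := hvmax_mem
  set f : ℝ → ℝ := fun lam => ∑ i, max (v i - lam) 0 with hf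
  have hcont : Continuous f := by
    apply continuous_finset_sum
    intro i _
    exact (continuous_const.sub continuous_id).max continuous_const
  have hmono : ∀ a b : ℝ, a < b → b ≤ vmax → f b < f a := by
    intro a b hab hb
    apply Finset.sum_lt_sum
    · intro i _
      exact max_le_max (by linarith) le_rfl
    · refine ⟨j, Finset.mem_univ j, ?_⟩
      rw [hj]
      have h1 : max (vmax - b) 0 = vmax - b := max_eq_left (by linarith)
      have h2 : max (vmax - a) 0 = vmax - a := max_eq_left (by linarith)
      rw [h1, h2]; linarith
  have hfvmax : f vmax = 0 := by
    apply Finset.sum_eq_zero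
    intro i _
    exact max_eq_right (by have := hvmax_le i; linarith)
  have hfa : t ≤ f (vmax - t) := by
    have h1 : max (v j - (vmax - t)) 0 = t := by
      rw [hj, show vmax - (vmax - t) = t from by ring]
      exact max_eq_left ht.le
    show t ≤ ∑ i, max (v i - (vmax - t)) 0
    calc t = max (v j - (vmax - t)) 0 := h1.symm
      _ ≤ ∑ i, max (v i - (vmax - t)) 0 :=
          Finset.single_le_sum (f := fun i => max (v i - (vmax - t)) 0)
            (fun i _ => le_max_right _ _) (Finset.mem_univ j)
  have hab : vmax - t ≤ vmax := by linarith
  have hIVT := intermediate_value_Icc' hab hcont.continuousOn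
  have ht_mem : t ∈ Set.Icc (f vmax) (f (vmax - t)) := by
    constructor
    · rw [hfvmax]; linarith
    · exact hfa
  obtain ⟨lam, hlam_mem, hlam_eq⟩ := hIVT ht_mem
  have hlam_lt : lam < vmax := by
    rcases lt_or_eq_of_le hlam_mem.2 with h | h
    · exact h
    · exfalso; rw [h, hfvmax] at hlam_eq; linarith
  refine ⟨lam, ⟨hlam_lt, by rw [← hlam_eq]; exact sub_self _⟩, ?_⟩
  rintro y ⟨hy_lt, hy_eq⟩
  have hy : f y = t := by simp only [hf]; linarith [hy_eq]
  rcases lt_trichotomy y lam with h | h | h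
  · have := hmono y lam h (le_of_lt hlam_lt)
    rw [hy, hlam_eq] at this; linarith
  · exact h
  · have := hmono lam y h (le_of_lt hy_lt)
    rw [hy, hlam_eq] at this; linarith
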